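/- For every k ≥ 1, the group K_k is torsion-free: every element of K_k other than the identity has infinite order. -/

import Mathlib

/-- The generator `g_i` acting on `(Fin k → R)`: it adds the `i`-th standard basis
vector `e_i` to `v` when `v j = 0` for all `j < i`, and fixes `v` otherwise. -/
def kGen (R : Type*) [AddGroup R] [One R] [DecidableEq R] (k : ℕ) (i : Fin k) :
    Equiv.Perm (Fin k → R) where
  toFun v := if ∀ j, j < i → v j = 0 then (fun j => v j + if j = i then 1 else 0) else v
  invFun v := if ∀ j, j < i → v j = 0 then (fun j => v j - if j = i then 1 else 0) else v
  left_inv v := by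
    by_cases h : ∀ j, j < i → v j = 0
    · have h' : ∀ j, j < i → v j + (if j = i then 1 else 0) = 0 := fun j hj => by
        rw [if_neg (Fin.ne_of_lt hj), add_zero]; exact h j hj
      simp only [if_pos h, if_pos h']
      funext j; exact add_sub_cancel_right _ _
    · simp only [if_neg h]
  right_inv v := by
    by_cases h : ∀ j, j < i → v j = 0
    · have h' : ∀ j, j < i → v j - (if j = i then 1 else 0) = 0 := fun j hj => by
        rw [if_neg (Fin.ne_of_lt hj), sub_zero]; exact h j hj
      simp only [if_pos h, if_pos h']
      funext j; exact sub_add_cancel _ _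
    · simp only [if_neg h]

/-- `K_k`: the subgroup of `Perm(ℤ^k)` generated by `g_1, …, g_k`. -/
def Kk (k : ℕ) : Subgroup (Equiv.Perm (Fin k → ℤ)) :=
  Subgroup.closure (Set.range (kGen ℤ k))

/-- `K_k^n`: the subgroup of `Perm((ℤ/nℤ)^k)` generated by `g_1^{(n)}, …, g_k^{(n)}`. -/
def KkMod (k n : ℕ) : Subgroup (Equiv.Perm (Fin k → ZMod n)) :=
  Subgroup.closure (Set.range (kGen (ZMod n) k))

/-- The diagonal generator `ĝ_i = (g_i^{(n)})_{n ≥ 1}` of `K̂_k` (with `n`-th coordinate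
indexed as `n + 1` so that all moduli `n + 1 ≥ 1` occur). -/
def ghat (k : ℕ) (i : Fin k) : ∀ n : ℕ, Equiv.Perm (Fin k → ZMod (n + 1)) :=
  fun n => kGen (ZMod (n + 1)) k i

/-- `K̂_k`: the subgroup of `∏_{n ≥ 1} Perm((ℤ/nℤ)^k)` generated by the diagonal
elements `ĝ_1, …, ĝ_k`. -/
def Khat (k : ℕ) : Subgroup (∀ n : ℕ, Equiv.Perm (Fin k → ZMod (n + 1))) :=
  Subgroup.closure (Set.range (ghat k))

lemma kk_key {k : ℕ} {x : Equiv.Perm (Fin k → ℤ)} (hx : x ∈ Kk k) :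
    ∀ (v w : Fin k → ℤ) (j : Fin k), (∀ t, t < j → v t = w t) →
      ∀ l, l ≤ j → x v l - v l = x w l - w l := by
  induction hx using Subgroup.closure_induction with
  | mem g hg =>
    obtain ⟨i, rfl⟩ := hg
    intro v w j hvw l hl
    show (kGen ℤ k i).toFun v l - v l = (kGen ℤ k i).toFun w l - w l
    simp only [kGen]
    by_cases hli : l = i
    · subst hli
      have hiff : (∀ t, t < l → v t = 0) ↔ (∀ t, t < l → w t = 0) := by
        constructor <;> intro h t ht <;>
          [rw [← hvw t (lt_of_lt_of_le ht hl)]; rw [hvw t (lt_of_lt_of_le ht hl)]] <;>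
          exact h t ht
      by_cases hc : ∀ t, t < l → v t = 0
      · rw [if_pos hc, if_pos (hiff.mp hc)]; simp
      · rw [if_neg hc, if_neg (fun h => hc (hiff.mpr h))]; ring
    · by_cases hc : ∀ t, t < i → v t = 0
      · by_cases hc' : ∀ t, t < i → w t = 0
        · rw [if_pos hc, if_pos hc']; simp [hli]
        · rw [if_pos hc, if_neg hc']; simp [hli]
      · by_cases hc' : ∀ t, t < i → w t = 0
        · rw [if_neg hc, if_pos hc']; simp [hli]
        · rw [if_neg hc, if_neg hc']; ring
  | one => intro v w j hvw l hl; simp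
  | mul a b _ _ pa pb =>
    intro v w j hvw l hl
    have hb := pb v w j hvw
    have hvw' : ∀ t, t < j → b v t = b w t := fun t ht => by
      have := hb t (le_of_lt ht); have := hvw t ht; omega
    have ha := pa (b v) (b w) j hvw' l hl
    have := hb l hl
    simp only [Equiv.Perm.mul_apply]
    omega
  | inv a _ pa =>
    intro v w j hvw
    have agree : ∀ t, t < j → a⁻¹ v t = a⁻¹ w t := by
      have H : ∀ n : ℕ, ∀ t : Fin k, t.val = n → t < j → a⁻¹ v t = a⁻¹ w t := by
        intro n
        induction n using Nat.strong_induction_on with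
        | _ n ih =>
          intro t htn htj
          have agree' : ∀ s, s < t → a⁻¹ v s = a⁻¹ w s := fun s hs =>
            ih s.val (htn ▸ hs) s rfl (lt_trans hs htj)
          have := pa (a⁻¹ v) (a⁻¹ w) t agree' t le_rfl
          simp only [show ∀ u, a (a⁻¹ u) = u from fun u => a.apply_symm_apply u] at this
          have := hvw t htj
          omega
      exact fun t ht => H t.val t rfl ht
    intro l hl
    have := pa (a⁻¹ v) (a⁻¹ w) j agree l hl
    simp only [show ∀ u, a (a⁻¹ u) = u from fun u => a.apply_symm_apply u] at this
    omega


/-- For every `k ≥ 1`, the group `K_k` is torsion-free: every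
non-identity element has infinite order. -/
theorem Kk_torsionFree (k : ℕ) (hk : 1 ≤ k) :
    ∀ x : Kk k, x ≠ 1 → ¬ IsOfFinOrder x := by
  classical
  intro x hx hfin
  set y : Equiv.Perm (Fin k → ℤ) := (x : Equiv.Perm (Fin k → ℤ)) with hy
  have hymem : y ∈ Kk k := x.2
  have hy1 : y ≠ 1 := fun h => hx (Subtype.ext h)
  have hyfin : IsOfFinOrder y := ((Kk k).subtype.isOfFinOrder hfin)
  obtain ⟨m, hm, hym⟩ := isOfFinOrder_iff_pow_eq_one.mp hyfin
  -- there exists a moved coordinate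
  have hex : ∃ n : ℕ, ∃ (j : Fin k) (v : Fin k → ℤ), j.val = n ∧ y v j ≠ v j := by
    by_contra h
    push_neg at h
    apply hy1
    ext v : 1
    funext j
    exact (h j.val j v rfl)
  
  have hmin : ∀ n < Nat.find hex, ¬ ∃ (j : Fin k) (v : Fin k → ℤ), j.val = n ∧ y v j ≠ v j :=
    fun n hn => Nat.find_min hex hn
  obtain ⟨j, v, hjn, hmove⟩ := Nat.find_spec hex
  have hfixlt : ∀ (t : Fin k), t < j → ∀ w : Fin k → ℤ, y w t = w t := by
    intro t ht w
    by_contra hne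
    exact hmin t.val (hjn ▸ ht) ⟨t, w, rfl, hne⟩
  -- powers fix coordinates below j
  have hfixpow : ∀ (n : ℕ) (t : Fin k), t < j → ∀ w : Fin k → ℤ, (y ^ n) w t = w t := by
    intro n
    induction n with
    | zero => intro t ht w; simp
    | succ n ih =>
      intro t ht w
      rw [pow_succ', Equiv.Perm.mul_apply, hfixlt t ht, ih t ht]
  set c : ℤ := y v j - v j with hc
  have hcne : c ≠ 0 := fun h => hmove (by omega)
  have hind : ∀ n : ℕ, (y ^ n) v j = v j + n * c := by
    intro n
    induction n with
    | zero => simp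
    | succ n ih =>
      have agree : ∀ t, t < j → v t = (y ^ n) v t := fun t ht => (hfixpow n t ht v).symm
      have h2 := kk_key hymem v ((y ^ n) v) j agree j le_rfl
      have h3 : (y ^ (n + 1)) v j = y ((y ^ n) v) j := by
        rw [pow_succ', Equiv.Perm.mul_apply]
      rw [h3]
      rw [ih] at h2
      rw [Nat.cast_succ]
      linarith [hc]
  have := hind m
  rw [hym] at this
  simp at this
  rcases this with h | h
  · omega
  · exact hcne h
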